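/- arXiv:1304.6851 — 3 statements merged into one kernel-verified Lean document; each statement's English description precedes it below -/
import Mathlib

section
/- Let R be a Noetherian commutative ring, I an ideal of R, and σ : R → R a finite flat ring endomorphism such that σ(I)·R and I generate the same adic topology (i.e. each of σ(I)R and I contains a power of the other). Then the I-adic completion R̂ of R satisfies R̂ ⊗_{R,σ} R ≅ R̂ canonically, i.e. the square formed by σ on R, the completion map R → R̂, and the induced endomorphism σ̂ on R̂ is cocartesian, and σ̂ : R̂ → R̂ is finite flat. -/
/-!
STATEMENT 2: Let `R` be a Noetherian commutative ring, `I` an ideal of `R`, and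
`σ : R → R` a finite flat ring endomorphism such that `σ(I)·R` and `I` generate the same
adic topology (each contains a power of the other).  Then the `I`-adic completion `R̂`
of `R` satisfies `R̂ ⊗_{R,σ} R ≅ R̂` canonically: there is a (unique continuous)
endomorphism `σ̂` of `R̂` extending `σ`, the square formed by `σ`, the completion map
`c : R → R̂` and `σ̂` is cocartesian (expressed by the pushout universal property in the
category of commutative rings), and `σ̂ : R̂ → R̂` is finite and flat.
-/

universe u v

theorem AdicCompletion.transitionMap_mk {R : Type*} [CommRing R] {I : Ideal R} {M : Type*}
    [AddCommGroup M] [Module R M] {m n : ℕ} (hmn : m ≤ n) (x : M) :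
    AdicCompletion.transitionMap I M hmn (Submodule.Quotient.mk x) = Submodule.Quotient.mk x :=
  rfl

open TensorProduct
suppress_compilation
namespace AdicFrob
variable {R : Type u} [CommRing R]

/-- `R` viewed as an `R`-algebra via `σ`. -/
def Twist (_σ : R →+* R) : Type u := R

instance (σ : R →+* R) : CommRing (Twist σ) := inferInstanceAs (CommRing R)
instance (σ : R →+* R) : Algebra R (Twist σ) := RingHom.toAlgebra σ

lemma algebraMap_twist (σ : R →+* R) (r : R) : algebraMap R (Twist σ) r = σ r := rfl
def unTwist (σ : R →+* R) (x : Twist σ) : R := x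
/-- The identity of `R`, viewed as landing in `Twist σ`. -/
def toTwist (σ : R →+* R) (x : R) : Twist σ := x
lemma twist_smul (σ : R →+* R) (r : R) (x : Twist σ) : unTwist σ (r • x) = σ r * unTwist σ x := rfl

lemma mem_twist_iff (σ : R →+* R) (K : Ideal R) (x : Twist σ) :
    x ∈ (K • ⊤ : Submodule R (Twist σ)) ↔ unTwist σ x ∈ K.map σ := by
  rw [Ideal.smul_top_eq_map]
  rfl

lemma mem_ideal_smul_top_iff (K : Ideal R) (x : R) :
    x ∈ (K • ⊤ : Ideal R) ↔ x ∈ K := by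
  rw [show (K • ⊤ : Ideal R) = K by simp]

/-- additive quotient map -/
def quotMapAux {M N : Type*} [AddCommGroup M] [Module R M] [AddCommGroup N] [Module R N]
    (p : Submodule R M) (q : Submodule R N) (f : M →+ N) (h : ∀ x ∈ p, f x ∈ q) :
    M ⧸ p → N ⧸ q :=
  Quotient.map' f (fun a b hab => by
    rw [Submodule.quotientRel_def] at hab ⊢
    rw [← map_sub]
    exact h _ hab)

lemma quotMapAux_mk {M N : Type*} [AddCommGroup M] [Module R M] [AddCommGroup N] [Module R N]
    (p : Submodule R M) (q : Submodule R N) (f : M →+ N) (h : ∀ x ∈ p, f x ∈ q) (x : M) :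
    quotMapAux p q f h (Submodule.Quotient.mk x) = Submodule.Quotient.mk (f x) := rfl

lemma quotMapAux_add {M N : Type*} [AddCommGroup M] [Module R M] [AddCommGroup N] [Module R N]
    (p : Submodule R M) (q : Submodule R N) (f : M →+ N) (h : ∀ x ∈ p, f x ∈ q)
    (x y : M ⧸ p) :
    quotMapAux p q f h (x + y) = quotMapAux p q f h x + quotMapAux p q f h y := by
  obtain ⟨a, rfl⟩ := Submodule.Quotient.mk_surjective _ x
  obtain ⟨b, rfl⟩ := Submodule.Quotient.mk_surjective _ y
  rw [← Submodule.Quotient.mk_add, quotMapAux_mk, quotMapAux_mk, quotMapAux_mk, map_add,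
    Submodule.Quotient.mk_add]


section Maps
open AdicCompletion
variable {R : Type u} [CommRing R] (I : Ideal R) (σ : R →+* R) (M N : ℕ)

lemma mapPow_le (hM : (I.map σ) ^ M ≤ I) (k : ℕ) :
    Ideal.map σ (I ^ (M * k)) ≤ I ^ k := by
  rw [Ideal.map_pow, pow_mul]
  exact Ideal.pow_right_mono hM k

lemma pow_le_map (hN : I ^ N ≤ I.map σ) (k : ℕ) :
    I ^ (N * k) ≤ Ideal.map σ (I ^ k) := by
  rw [Ideal.map_pow, pow_mul]
  exact Ideal.pow_right_mono hN k

lemma le_comap_aux (hM : (I.map σ) ^ M ≤ I) (k : ℕ) :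
    (I ^ (M * k) • ⊤ : Ideal R) ≤ ((I ^ k • ⊤ : Ideal R)).comap σ := by
  intro x hx
  rw [mem_ideal_smul_top_iff] at hx
  rw [Ideal.mem_comap, mem_ideal_smul_top_iff]
  exact mapPow_le I σ M hM k (Ideal.mem_map_of_mem σ hx)

/-- Component maps of `σ̂`. -/
def sigmaQ (hM : (I.map σ) ^ M ≤ I) (k : ℕ) :
    R ⧸ (I ^ (M * k) • ⊤ : Ideal R) →+* R ⧸ (I ^ k • ⊤ : Ideal R) :=
  Ideal.quotientMap _ σ (le_comap_aux I σ M hM k)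

lemma sigmaQ_mk (hM : (I.map σ) ^ M ≤ I) (k : ℕ) (x : R) :
    sigmaQ I σ M hM k (Submodule.Quotient.mk x) = Submodule.Quotient.mk (σ x) := by
  rw [Ideal.Quotient.mk_eq_mk, Ideal.Quotient.mk_eq_mk, sigmaQ, Ideal.quotientMap_mk]

/-- Component maps of `ψ`. -/
def psiQ (hM : (I.map σ) ^ M ≤ I) (k : ℕ) :
    Twist σ ⧸ (I ^ (M * k) • ⊤ : Submodule R (Twist σ)) → R ⧸ (I ^ k • ⊤ : Ideal R) :=
  quotMapAux _ _ (AddMonoidHom.id R) (fun x hx => by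
    rw [mem_twist_iff] at hx
    rw [mem_ideal_smul_top_iff]
    exact mapPow_le I σ M hM k hx)

lemma psiQ_mk (hM : (I.map σ) ^ M ≤ I) (k : ℕ) (x : Twist σ) :
    psiQ I σ M hM k (Submodule.Quotient.mk x) = Submodule.Quotient.mk (unTwist σ x) := rfl

lemma psiQ_add (hM : (I.map σ) ^ M ≤ I) (k : ℕ)
    (x y : Twist σ ⧸ (I ^ (M * k) • ⊤ : Submodule R (Twist σ))) :
    psiQ I σ M hM k (x + y) = psiQ I σ M hM k x + psiQ I σ M hM k y := by
  obtain ⟨a, rfl⟩ := Submodule.Quotient.mk_surjective _ x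
  obtain ⟨b, rfl⟩ := Submodule.Quotient.mk_surjective _ y
  rw [← Submodule.Quotient.mk_add, psiQ_mk, psiQ_mk, psiQ_mk, ← Submodule.Quotient.mk_add]
  rfl

/-- Component maps of the inverse of `ψ`. -/
def phiQ (hN : I ^ N ≤ I.map σ) (k : ℕ) :
    R ⧸ (I ^ (N * k) • ⊤ : Ideal R) → Twist σ ⧸ (I ^ k • ⊤ : Submodule R (Twist σ)) :=
  quotMapAux _ _ (AddMonoidHom.id R) (fun x hx => by
    rw [mem_ideal_smul_top_iff] at hx
    rw [mem_twist_iff]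
    exact pow_le_map I σ N hN k hx)

lemma phiQ_mk (hN : I ^ N ≤ I.map σ) (k : ℕ) (x : R) :
    phiQ I σ N hN k (Submodule.Quotient.mk x) = Submodule.Quotient.mk (toTwist σ x) := rfl

variable (hM : (I.map σ) ^ M ≤ I) (hN : I ^ N ≤ I.map σ)

lemma val_algebraMap' (r : R) (k : ℕ) :
    (algebraMap R (AdicCompletion I R) r).val k = Submodule.Quotient.mk r := by
  rw [Ideal.Quotient.mk_eq_mk]
  rfl

/-- The underlying function of `σ̂`. -/
def sigmaHatFun (x : AdicCompletion I R) : AdicCompletion I R :=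
  ⟨fun k => sigmaQ I σ M hM k (x.val (M * k)), by
    intro k l hkl
    dsimp only
    rw [← x.property (Nat.mul_le_mul (le_refl M) hkl)]
    obtain ⟨w, hw⟩ := Submodule.Quotient.mk_surjective _ (x.val (M * l))
    rw [← hw, sigmaQ_mk, transitionMap_mk, transitionMap_mk, sigmaQ_mk]⟩

lemma sigmaHatFun_val (x : AdicCompletion I R) (k : ℕ) :
    (sigmaHatFun I σ M hM x).val k = sigmaQ I σ M hM k (x.val (M * k)) := rfl

set_option maxHeartbeats 1000000 in
/-- The induced endomorphism of the adic completion. -/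
def sigmaHat : AdicCompletion I R →+* AdicCompletion I R where
  toFun := sigmaHatFun I σ M hM
  map_one' := by
    ext k
    rw [sigmaHatFun_val, val_one, val_one, _root_.map_one]
  map_mul' x y := by
    ext k
    rw [sigmaHatFun_val, val_mul, val_mul, sigmaHatFun_val, sigmaHatFun_val, _root_.map_mul]
  map_zero' := by
    ext k
    rw [sigmaHatFun_val, val_zero_apply, val_zero_apply, _root_.map_zero]
  map_add' x y := by
    ext k
    rw [sigmaHatFun_val, val_add_apply, val_add_apply, sigmaHatFun_val, sigmaHatFun_val, _root_.map_add]

lemma sigmaHat_val (x : AdicCompletion I R) (k : ℕ) :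
    (sigmaHat I σ M hM x).val k = sigmaQ I σ M hM k (x.val (M * k)) := rfl

lemma sigmaHat_comp_algebraMap :
    (sigmaHat I σ M hM).comp (algebraMap R (AdicCompletion I R)) =
      (algebraMap R (AdicCompletion I R)).comp σ := by
  ext r : 1
  ext k
  rw [RingHom.comp_apply, RingHom.comp_apply, sigmaHat_val, val_algebraMap', val_algebraMap',
    sigmaQ_mk]

/-- The comparison map from the completion of the twisted module. -/
def psi : AdicCompletion I (Twist σ) → AdicCompletion I R := fun y =>
  ⟨fun k => psiQ I σ M hM k (y.val (M * k)), by
    intro k l hkl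
    dsimp only
    rw [← y.property (Nat.mul_le_mul (le_refl M) hkl)]
    obtain ⟨w, hw⟩ := Submodule.Quotient.mk_surjective _ (y.val (M * l))
    rw [← hw, psiQ_mk, transitionMap_mk, transitionMap_mk, psiQ_mk]⟩

lemma psi_val (y : AdicCompletion I (Twist σ)) (k : ℕ) :
    (psi I σ M hM y).val k = psiQ I σ M hM k (y.val (M * k)) := rfl

lemma psi_add (y z : AdicCompletion I (Twist σ)) :
    psi I σ M hM (y + z) = psi I σ M hM y + psi I σ M hM z := by
  ext k
  rw [val_add_apply, psi_val, psi_val, psi_val, val_add_apply, psiQ_add]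

lemma psi_zero : psi I σ M hM 0 = 0 := by
  ext k
  rw [psi_val, AdicCompletion.val_zero_apply, AdicCompletion.val_zero_apply,
    show (0 : Twist σ ⧸ (I ^ (M * k) • ⊤ : Submodule R (Twist σ))) =
      Submodule.Quotient.mk (0 : Twist σ) from (Submodule.Quotient.mk_zero _).symm, psiQ_mk]
  exact Submodule.Quotient.mk_zero _

lemma psi_of (x : Twist σ) :
    psi I σ M hM (AdicCompletion.of I (Twist σ) x) =
      algebraMap R (AdicCompletion I R) (unTwist σ x) := by
  ext k
  rw [psi_val, val_algebraMap', of_apply, Submodule.mkQ_apply, psiQ_mk]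

lemma psi_smul (a : AdicCompletion I R) (y : AdicCompletion I (Twist σ)) :
    psi I σ M hM (a • y) = sigmaHat I σ M hM a * psi I σ M hM y := by
  ext k
  rw [psi_val, val_mul, sigmaHat_val, psi_val, smul_eval]
  obtain ⟨r, hr⟩ := Submodule.Quotient.mk_surjective _ (a.val (M * k))
  obtain ⟨w, hw⟩ := Submodule.Quotient.mk_surjective _ (y.val (M * k))
  rw [← hr, ← hw, Ideal.Quotient.mk_eq_mk, mk_smul_mk, ← Submodule.Quotient.mk_smul,
    psiQ_mk, ← Ideal.Quotient.mk_eq_mk, sigmaQ_mk, psiQ_mk, twist_smul,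
    Ideal.Quotient.mk_eq_mk (I := (I ^ k • ⊤ : Ideal R)),
    Ideal.Quotient.mk_eq_mk (I := (I ^ k • ⊤ : Ideal R)),
    Ideal.Quotient.mk_eq_mk (I := (I ^ k • ⊤ : Ideal R)), ← _root_.map_mul]


include hN in
lemma psi_injective (hM1 : 0 < M) (hN1 : 0 < N) : Function.Injective (psi I σ M hM) := by
  intro y z h
  ext s
  have hs : M * (N * s) ≥ s :=
    le_trans (Nat.le_mul_of_pos_left s hN1) (Nat.le_mul_of_pos_left (N * s) hM1)
  have h' := congrArg (fun t : AdicCompletion I R => t.val (N * s)) h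
  obtain ⟨a, ha⟩ := Submodule.Quotient.mk_surjective _ (y.val (M * (N * s)))
  obtain ⟨b, hb⟩ := Submodule.Quotient.mk_surjective _ (z.val (M * (N * s)))
  simp only [psi_val] at h'
  rw [← ha, ← hb, psiQ_mk, psiQ_mk] at h'
  have hd : unTwist σ a - unTwist σ b ∈ (I ^ (N * s) • ⊤ : Ideal R) :=
    (Submodule.Quotient.eq _).mp h'
  rw [mem_ideal_smul_top_iff] at hd
  have hab : a - b ∈ (I ^ s • ⊤ : Submodule R (Twist σ)) :=
    (mem_twist_iff σ _ _).mpr (pow_le_map I σ N hN s hd)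
  rw [← y.property hs, ← z.property hs, ← ha, ← hb, AdicCompletion.transitionMap_mk,
    AdicCompletion.transitionMap_mk]
  exact (Submodule.Quotient.eq _).mpr hab

/-- The inverse of `psi`. -/
def phiFun (x : AdicCompletion I R) : AdicCompletion I (Twist σ) :=
  ⟨fun k => phiQ I σ N hN k (x.val (N * k)), by
    intro k l hkl
    dsimp only
    rw [← x.property (Nat.mul_le_mul (le_refl N) hkl)]
    obtain ⟨w, hw⟩ := Submodule.Quotient.mk_surjective _ (x.val (N * l))
    rw [← hw, phiQ_mk, AdicCompletion.transitionMap_mk, AdicCompletion.transitionMap_mk, phiQ_mk]⟩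

lemma psi_phiFun (hM1 : 0 < M) (hN1 : 0 < N) (x : AdicCompletion I R) :
    psi I σ M hM (phiFun I σ N hN x) = x := by
  ext k
  have hk : k ≤ N * (M * k) :=
    le_trans (Nat.le_mul_of_pos_left k hM1) (Nat.le_mul_of_pos_left (M * k) hN1)
  obtain ⟨r, hr⟩ := Submodule.Quotient.mk_surjective _ (x.val (N * (M * k)))
  have hv : (phiFun I σ N hN x).val (M * k) = phiQ I σ N hN (M * k) (x.val (N * (M * k))) := rfl
  rw [psi_val, hv, ← x.property hk, ← hr, phiQ_mk, psiQ_mk, AdicCompletion.transitionMap_mk]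
  rfl

include hN in
lemma psi_bijective (hM1 : 0 < M) (hN1 : 0 < N) : Function.Bijective (psi I σ M hM) :=
  ⟨psi_injective I σ M N hM hN hM1 hN1,
   fun x => ⟨phiFun I σ N hN x, psi_phiFun I σ M N hM hN hM1 hN1 x⟩⟩

end Maps

section Tensor
open AdicCompletion TensorProduct

variable {R : Type u} [CommRing R] (I : Ideal R) (σ : R →+* R) (M N : ℕ)

lemma twist_finite (h : σ.Finite) : Module.Finite R (Twist σ) := h

lemma twist_flat (h : σ.Flat) : Module.Flat R (Twist σ) := h

/-- The codomain of `σ̂`, with the twisted `R`-algebra structure. -/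
def Acod (I : Ideal R) (σ : R →+* R) : Type u := AdicCompletion I R

noncomputable instance : CommRing (Acod I σ) :=
  inferInstanceAs (CommRing (AdicCompletion I R))

noncomputable instance : Algebra R (Acod I σ) :=
  ((algebraMap R (AdicCompletion I R)).comp σ).toAlgebra

/-- `Acod` is just the adic completion. -/
def acodEquiv : Acod I σ ≃+* AdicCompletion I R := RingEquiv.refl (AdicCompletion I R)

variable (hM : (I.map σ) ^ M ≤ I) (hN : I ^ N ≤ I.map σ)

/-- `σ̂` as an `R`-algebra map into the twisted codomain. -/
noncomputable def sigmaHatAlg : AdicCompletion I R →ₐ[R] Acod I σ where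
  toRingHom := sigmaHat I σ M hM
  commutes' := fun r => RingHom.congr_fun (sigmaHat_comp_algebraMap I σ M hM) r

/-- The completion map as an `R`-algebra map from the twist into the twisted codomain. -/
noncomputable def cAlg : Twist σ →ₐ[R] Acod I σ where
  toRingHom := (algebraMap R (AdicCompletion I R) : R →+* AdicCompletion I R)
  commutes' := fun _ => rfl

/-- The multiplication map `R̂ ⊗[R,σ] R → R̂`. -/
noncomputable def e0 : (AdicCompletion I R) ⊗[R] (Twist σ) →+* AdicCompletion I R :=
  ((acodEquiv I σ).toRingHom).comp
    (Algebra.TensorProduct.productMap (sigmaHatAlg I σ M hM) (cAlg I σ)).toRingHom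

lemma e0_tmul (a : AdicCompletion I R) (x : Twist σ) :
    e0 I σ M hM (a ⊗ₜ x) =
      sigmaHat I σ M hM a * algebraMap R (AdicCompletion I R) (unTwist σ x) := rfl

lemma e0_eq : ⇑(e0 I σ M hM) = psi I σ M hM ∘ ⇑(ofTensorProduct I (Twist σ)) := by
  funext z
  induction z using TensorProduct.induction_on with
  | zero => rw [RingHom.map_zero, Function.comp_apply, LinearMap.map_zero, psi_zero]
  | tmul a x =>
      rw [Function.comp_apply, ofTensorProduct_tmul, psi_smul, psi_of, e0_tmul]
  | add u v hu hv =>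
      rw [RingHom.map_add, Function.comp_apply, LinearMap.map_add, psi_add, hu, hv,
        Function.comp_apply, Function.comp_apply]

include hN in
lemma e0_bijective [IsNoetherianRing R] (hfin : σ.Finite) (hM1 : 0 < M) (hN1 : 0 < N) :
    Function.Bijective (e0 I σ M hM) := by
  haveI : Module.Finite R (Twist σ) := twist_finite σ hfin
  rw [show ⇑(e0 I σ M hM) = _ from e0_eq I σ M hM]
  exact (psi_bijective I σ M N hM hN hM1 hN1).comp
    (ofTensorProduct_bijective_of_finite_of_isNoetherian I (Twist σ))

end Tensor

section Transport

variable {A B : Type*} [CommRing A] [CommRing B]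

lemma ringHom_finite_of_algebra [i : Algebra A B] [hfin : Module.Finite A B] :
    (algebraMap A B).Finite := by
  have e : (algebraMap A B).toAlgebra = i := Algebra.algebra_ext _ _ fun r => rfl
  show @Module.Finite A B _ _ ((algebraMap A B).toAlgebra).toModule
  rw [e]
  exact hfin

lemma ringHom_flat_of_algebra [i : Algebra A B] [hflat : Module.Flat A B] :
    (algebraMap A B).Flat := by
  have e : (algebraMap A B).toAlgebra = i := Algebra.algebra_ext _ _ fun r => rfl
  exact RingHom.flat_algebraMap_iff.mpr hflat

lemma ringHom_flat_of_bijective (f : A →+* B) (h : Function.Bijective f) : f.Flat := by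
  letI := f.toAlgebra
  exact Module.Flat.of_linearEquiv
    (LinearEquiv.ofBijective (Algebra.linearMap A B) h).symm

end Transport

end AdicFrob

open TensorProduct AdicFrob

theorem adicCompletion_frobenius_cocartesian_finite_flat
    (R : Type u) [CommRing R] [IsNoetherianRing R] (I : Ideal R)
    (σ : R →+* R) (hσfin : σ.Finite) (hσflat : σ.Flat)
    (n m : ℕ) (h1 : I ^ n ≤ I.map σ) (h2 : (I.map σ) ^ m ≤ I) :
    ∃ σc : AdicCompletion I R →+* AdicCompletion I R,
      σc.comp (algebraMap R (AdicCompletion I R)) =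
        (algebraMap R (AdicCompletion I R)).comp σ ∧
      σc.Finite ∧ σc.Flat ∧
      ∀ (T : Type v) [CommRing T] (f : R →+* T) (g : AdicCompletion I R →+* T),
        f.comp σ = g.comp (algebraMap R (AdicCompletion I R)) →
        ∃! h : AdicCompletion I R →+* T,
          h.comp (algebraMap R (AdicCompletion I R)) = f ∧ h.comp σc = g := by
  have hM : (I.map σ) ^ (m + 1) ≤ I := (Ideal.pow_le_pow_right (Nat.le_succ m)).trans h2
  have hN : I ^ (n + 1) ≤ I.map σ := (Ideal.pow_le_pow_right (Nat.le_succ n)).trans h1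
  haveI : Module.Finite R (Twist σ) := twist_finite σ hσfin
  haveI : Module.Flat R (Twist σ) := twist_flat σ hσflat
  have hbij : Function.Bijective (e0 I σ (m + 1) hM) :=
    e0_bijective I σ (m + 1) (n + 1) hM hN hσfin (Nat.succ_pos m) (Nat.succ_pos n)
  let B := AdicCompletion I R ⊗[R] Twist σ
  let e : B ≃+* AdicCompletion I R := RingEquiv.ofBijective (e0 I σ (m + 1) hM) hbij
  have he : ∀ z : B, e z = e0 I σ (m + 1) hM z := fun z => rfl
  have hincl : (e0 I σ (m + 1) hM).comp (algebraMap (AdicCompletion I R) B) =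
      sigmaHat I σ (m + 1) hM := by
    ext a
    rw [RingHom.comp_apply,
      show algebraMap (AdicCompletion I R) B a = a ⊗ₜ (1 : Twist σ) from rfl, e0_tmul,
      show unTwist σ (1 : Twist σ) = 1 from rfl, map_one, mul_one]
  refine ⟨sigmaHat I σ (m + 1) hM, sigmaHat_comp_algebraMap I σ (m + 1) hM, ?_, ?_, ?_⟩
  · -- finite
    rw [← hincl]
    exact RingHom.Finite.comp (RingHom.Finite.of_surjective _ hbij.surjective)
      ringHom_finite_of_algebra
  · -- flat
    rw [← hincl]
    haveI : ((algebraMap (AdicCompletion I R) B)).Flat := ringHom_flat_of_algebra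
    haveI : (e0 I σ (m + 1) hM).Flat := ringHom_flat_of_bijective _ hbij
    exact RingHom.Flat.comp (f := algebraMap (AdicCompletion I R) B) ‹_› ‹_›
  · -- pushout
    intro T _ f g hfg
    letI : Algebra R T := (g.comp (algebraMap R (AdicCompletion I R))).toAlgebra
    let gA : AdicCompletion I R →ₐ[R] T := { toRingHom := g, commutes' := fun r => rfl }
    let fA : Twist σ →ₐ[R] T :=
      { toRingHom := (f : R →+* T), commutes' := fun r => RingHom.congr_fun hfg r }
    let h0 : B →+* T := (Algebra.TensorProduct.productMap gA fA).toRingHom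
    have h0_tmul : ∀ (a : AdicCompletion I R) (x : Twist σ),
        h0 (a ⊗ₜ x) = g a * f (unTwist σ x) := fun a x => rfl
    have heL : ∀ a : AdicCompletion I R, e (a ⊗ₜ (1 : Twist σ)) = sigmaHat I σ (m + 1) hM a := by
      intro a
      rw [he, e0_tmul, show unTwist σ (1 : Twist σ) = 1 from rfl, map_one, mul_one]
    have heR : ∀ r : R, e ((1 : AdicCompletion I R) ⊗ₜ toTwist σ r) =
        algebraMap R (AdicCompletion I R) r := by
      intro r
      rw [he, e0_tmul, map_one, one_mul]
      rfl
    refine ⟨h0.comp e.symm.toRingHom, ⟨?_, ?_⟩, ?_⟩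
    · ext r
      rw [RingHom.comp_apply, RingHom.comp_apply, RingEquiv.toRingHom_eq_coe,
        RingHom.coe_coe, ← heR r, RingEquiv.symm_apply_apply,
        h0_tmul, map_one, one_mul]
      rfl
    · ext a
      rw [RingHom.comp_apply, RingHom.comp_apply, RingEquiv.toRingHom_eq_coe,
        RingHom.coe_coe, ← heL a, RingEquiv.symm_apply_apply,
        h0_tmul, show f (unTwist σ (1 : Twist σ)) = (1 : T) from map_one f, mul_one]
    · rintro h' ⟨h'1, h'2⟩
      have key : ∀ z : B, h' (e0 I σ (m + 1) hM z) = h0 z := by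
        intro z
        induction z using TensorProduct.induction_on with
        | zero => rw [RingHom.map_zero (e0 I σ (m + 1) hM), RingHom.map_zero h', RingHom.map_zero h0]
        | tmul a x =>
            rw [e0_tmul, RingHom.map_mul h',
              show h' (sigmaHat I σ (m + 1) hM a) = g a from RingHom.congr_fun h'2 a,
              show h' (algebraMap R (AdicCompletion I R) (unTwist σ x)) = f (unTwist σ x) from
                RingHom.congr_fun h'1 (unTwist σ x), h0_tmul]
        | add u v hu hv =>
            rw [RingHom.map_add (e0 I σ (m + 1) hM), RingHom.map_add h', hu, hv, RingHom.map_add h0]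
      ext a
      rw [RingHom.comp_apply, RingEquiv.toRingHom_eq_coe, RingHom.coe_coe]
      have hthis := key (e.symm a)
      rwa [show e0 I σ (m + 1) hM (e.symm a) = e (e.symm a) from rfl,
        RingEquiv.apply_symm_apply] at hthis
end

section
/- Let o_L be a complete discrete valuation ring with uniformizer π, residue field ℓ, and fraction field L. Let M and N be finite free o_L⟦z⟧-modules of the same rank s, and ψ : M → N an o_L⟦z⟧-linear map which becomes an isomorphism after inverting π. Suppose there exist injective endomorphisms F_M of M and F_N of N (semilinear over a common finite flat Frobenius σ of o_L⟦z⟧ lifting the r-Frobenius of ℓ and fixing z) intertwined by ψ, whose cokernels are finite free o_L-modules of the same o_L-rank and are annihilated by a power of (z − ζ) with ζ ∈ πo_L. Then ψ itself is an isomorphism. -/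
/-!
STATEMENT 11: Let `o_L = ℓ⟦π⟧` (with `ℓ` of characteristic `p` and `r = p^e`), and let
`σ : o_L⟦z⟧ → o_L⟦z⟧` be the `r`-Frobenius lift fixing `z` and raising coefficients to
`r`-th powers.  Let `M`, `N` be finite free `o_L⟦z⟧`-modules of the same rank `s` and
`ψ : M → N` an `o_L⟦z⟧`-linear map which becomes an isomorphism after inverting `π`.
Suppose there are injective `σ`-semilinear endomorphisms `F_M`, `F_N` intertwined by
`ψ`, whose cokernels (quotients by the `o_L⟦z⟧`-span of the image) are finite free
`o_L`-modules of the same `o_L`-rank and are annihilated by a power of `(z − ζ)` with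
`ζ ∈ π·o_L`.  Then `ψ` itself is an isomorphism.
-/

open PowerSeries

lemma aux_map_cc_eq_zero_iff {ℓ : Type*} [Field ℓ] (a : PowerSeries (PowerSeries ℓ)) :
    PowerSeries.map ((constantCoeff : PowerSeries ℓ →+* ℓ)) a = 0 ↔
      ((PowerSeries.C : PowerSeries ℓ →+* PowerSeries (PowerSeries ℓ)) (X : PowerSeries ℓ)) ∣ a := by
  constructor
  · intro h0
    have h : ∀ n : ℕ, ∃ cn : PowerSeries ℓ, coeff n a = X * cn := by
      intro n
      refine X_dvd_iff.mpr ?_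
      have := congrArg (fun f => coeff n f) h0
      simpa [PowerSeries.coeff_map] using this
    refine ⟨PowerSeries.mk fun n => (h n).choose, ?_⟩
    refine PowerSeries.ext fun n => ?_
    rw [PowerSeries.coeff_C_mul, PowerSeries.coeff_mk]
    exact (h n).choose_spec
  · rintro ⟨c, rfl⟩
    rw [map_mul, PowerSeries.map_C]
    simp

lemma aux_prime_piC (ℓ : Type*) [Field ℓ] :
    Prime ((PowerSeries.C : PowerSeries ℓ →+* PowerSeries (PowerSeries ℓ)) (X : PowerSeries ℓ)) := by
  refine ⟨?_, ?_, ?_⟩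
  · intro h
    apply PowerSeries.X_ne_zero (R := ℓ)
    simpa using congrArg ((constantCoeff : PowerSeries (PowerSeries ℓ) →+* PowerSeries ℓ)) h
  · intro hu
    have := (hu.map (PowerSeries.map ((constantCoeff : PowerSeries ℓ →+* ℓ))))
    rw [PowerSeries.map_C] at this
    simp at this
  · intro x y hxy
    have h0 : PowerSeries.map ((constantCoeff : PowerSeries ℓ →+* ℓ)) x * PowerSeries.map ((constantCoeff : PowerSeries ℓ →+* ℓ)) y = 0 := by
      rw [← map_mul]
      exact (aux_map_cc_eq_zero_iff _).mpr hxy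
    rcases mul_eq_zero.mp h0 with h | h
    · exact Or.inl ((aux_map_cc_eq_zero_iff _).mp h)
    · exact Or.inr ((aux_map_cc_eq_zero_iff _).mp h)


/-- The `r = p^e`-Frobenius lift on `o_L⟦z⟧` (`o_L = ℓ⟦π⟧`) fixing `z`. -/
noncomputable def frobLift (ℓ : Type*) [Field ℓ] (p e : ℕ) [Fact p.Prime]
    [CharP (PowerSeries ℓ) p] :
    PowerSeries (PowerSeries ℓ) →+* PowerSeries (PowerSeries ℓ) :=
  PowerSeries.map (iterateFrobenius (PowerSeries ℓ) p e)

theorem psi_isomorphism_of_frobenius_intertwined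
    (ℓ : Type*) [Field ℓ] (p e : ℕ) [Fact p.Prime] [CharP ℓ p]
    [CharP (PowerSeries ℓ) p] (he : 1 ≤ e)
    -- `ℓ` is a finite extension of `ℓ^r`:
    (hℓ : (iterateFrobenius ℓ p e).Finite)
    (M N : Type*) [AddCommGroup M] [AddCommGroup N]
    [Module (PowerSeries (PowerSeries ℓ)) M] [Module (PowerSeries (PowerSeries ℓ)) N]
    [Module (PowerSeries ℓ) M] [IsScalarTower (PowerSeries ℓ) (PowerSeries (PowerSeries ℓ)) M]
    [Module (PowerSeries ℓ) N] [IsScalarTower (PowerSeries ℓ) (PowerSeries (PowerSeries ℓ)) N]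
    [Module.Free (PowerSeries (PowerSeries ℓ)) M] [Module.Finite (PowerSeries (PowerSeries ℓ)) M]
    [Module.Free (PowerSeries (PowerSeries ℓ)) N] [Module.Finite (PowerSeries (PowerSeries ℓ)) N]
    (s : ℕ)
    (hrkM : Module.finrank (PowerSeries (PowerSeries ℓ)) M = s)
    (hrkN : Module.finrank (PowerSeries (PowerSeries ℓ)) N = s)
    (FM : M →ₛₗ[frobLift ℓ p e] M) (FN : N →ₛₗ[frobLift ℓ p e] N)
    (hFM : Function.Injective FM) (hFN : Function.Injective FN)
    (ψ : M →ₗ[PowerSeries (PowerSeries ℓ)] N)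
    (hint : ∀ m : M, ψ (FM m) = FN (ψ m))
    -- `ψ` becomes an isomorphism after inverting `π`:
    (hψiso : ∃ (φ : N →ₗ[PowerSeries (PowerSeries ℓ)] M) (k : ℕ),
      φ.comp ψ = ((PowerSeries.C : PowerSeries ℓ →+* PowerSeries (PowerSeries ℓ)) ((PowerSeries.X : PowerSeries ℓ) ^ k)) •
          (LinearMap.id : M →ₗ[PowerSeries (PowerSeries ℓ)] M) ∧
      ψ.comp φ = ((PowerSeries.C : PowerSeries ℓ →+* PowerSeries (PowerSeries ℓ)) ((PowerSeries.X : PowerSeries ℓ) ^ k)) •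
          (LinearMap.id : N →ₗ[PowerSeries (PowerSeries ℓ)] N))
    (ζ : PowerSeries ℓ) (hζ : ζ ∈ Ideal.span {(PowerSeries.X : PowerSeries ℓ)})
    (d : ℕ)
    -- the cokernels are annihilated by `(z − ζ)^d`:
    (hannM : ∀ m : M, (((PowerSeries.X : PowerSeries (PowerSeries ℓ)) -
        (PowerSeries.C : PowerSeries ℓ →+* PowerSeries (PowerSeries ℓ)) ζ) ^ d) • m ∈
        Submodule.span (PowerSeries (PowerSeries ℓ)) (Set.range FM))
    (hannN : ∀ n : N, (((PowerSeries.X : PowerSeries (PowerSeries ℓ)) -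
        (PowerSeries.C : PowerSeries ℓ →+* PowerSeries (PowerSeries ℓ)) ζ) ^ d) • n ∈
        Submodule.span (PowerSeries (PowerSeries ℓ)) (Set.range FN))
    -- the cokernels are finite free `o_L`-modules of the same rank:
    [Module.Finite (PowerSeries ℓ)
      (M ⧸ Submodule.span (PowerSeries (PowerSeries ℓ)) (Set.range FM))]
    [Module.Free (PowerSeries ℓ)
      (M ⧸ Submodule.span (PowerSeries (PowerSeries ℓ)) (Set.range FM))]
    [Module.Finite (PowerSeries ℓ)
      (N ⧸ Submodule.span (PowerSeries (PowerSeries ℓ)) (Set.range FN))]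
    [Module.Free (PowerSeries ℓ)
      (N ⧸ Submodule.span (PowerSeries (PowerSeries ℓ)) (Set.range FN))]
    (hrkcok : Module.finrank (PowerSeries ℓ)
        (M ⧸ Submodule.span (PowerSeries (PowerSeries ℓ)) (Set.range FM)) =
      Module.finrank (PowerSeries ℓ)
        (N ⧸ Submodule.span (PowerSeries (PowerSeries ℓ)) (Set.range FN))) :
    Function.Bijective ψ := by
  classical
  obtain ⟨φ, k, hφψ, hψφ⟩ := hψiso
  set R := PowerSeries (PowerSeries ℓ) with hRdef
  let b : Module.Basis (Fin s) R M := Module.finBasisOfFinrankEq R M hrkM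
  let c : Module.Basis (Fin s) R N := Module.finBasisOfFinrankEq R N hrkN
  set A : Matrix (Fin s) (Fin s) R := LinearMap.toMatrix b c ψ with hA
  set B : Matrix (Fin s) (Fin s) R := LinearMap.toMatrix c b φ with hB
  set π : R := (PowerSeries.C : PowerSeries ℓ →+* PowerSeries (PowerSeries ℓ)) X with hπ
  set mm : R →+* PowerSeries ℓ := PowerSeries.map ((constantCoeff : PowerSeries ℓ →+* ℓ)) with hmm
  have hπprime : Prime π := aux_prime_piC ℓ
  -- Step 1: det A divides π ^ (k * s)
  have hBA : B * A = ((PowerSeries.C : PowerSeries ℓ →+* PowerSeries (PowerSeries ℓ)) ((X : PowerSeries ℓ) ^ k)) •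
      (1 : Matrix (Fin s) (Fin s) R) := by
    rw [hB, hA, ← LinearMap.toMatrix_comp b c b φ ψ, hφψ, map_smul,
      LinearMap.toMatrix_id]
  have hdetBA : B.det * A.det = π ^ (k * s) := by
    have h := congrArg Matrix.det hBA
    rw [Matrix.det_mul, Matrix.det_smul, Matrix.det_one, mul_one] at h
    rw [h, hπ, map_pow, ← pow_mul, Fintype.card_fin]
  have hdvd : A.det ∣ π ^ (k * s) := ⟨B.det, by rw [← hdetBA, mul_comm]⟩
  obtain ⟨a, _, u, hu⟩ := (dvd_prime_pow hπprime (k * s)).mp hdvd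
  -- hu : A.det * ↑u = π ^ a
  -- Step 2: matrices of FM and FN
  set P : Matrix (Fin s) (Fin s) R := fun i j => b.repr (FM (b j)) i with hP
  set Q : Matrix (Fin s) (Fin s) R := fun i j => c.repr (FN (c j)) i with hQ
  have hFMb : ∀ j, FM (b j) = ∑ i, P i j • b i := fun j => (b.sum_repr _).symm
  have hFNc : ∀ j, FN (c j) = ∑ i, Q i j • c i := fun j => (c.sum_repr _).symm
  have hreprM : ∀ (x : Fin s → R) (y : Fin s → M) (i : Fin s),
      b.repr (∑ t, x t • y t) i = ∑ t, x t * b.repr (y t) i := by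
    intro x y i
    rw [map_sum]
    simp [Finset.sum_apply']
  have hreprN : ∀ (x : Fin s → R) (y : Fin s → N) (i : Fin s),
      c.repr (∑ t, x t • y t) i = ∑ t, x t * c.repr (y t) i := by
    intro x y i
    rw [map_sum]
    simp [Finset.sum_apply']
  -- Step 3: intertwining in matrix form : A * P = Q * A.map σ
  have hAPQA : A * P = Q * A.map ⇑(frobLift ℓ p e) := by
    ext i j
    have h1 : (A * P) i j = c.repr (ψ (FM (b j))) i := by
      rw [hFMb j, map_sum]
      simp only [map_smul]
      rw [hreprN, Matrix.mul_apply]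
      refine Finset.sum_congr rfl fun t _ => ?_
      rw [mul_comm, hA, LinearMap.toMatrix_apply]
    have h2 : (Q * A.map ⇑(frobLift ℓ p e)) i j = c.repr (FN (ψ (b j))) i := by
      conv_rhs => rw [← c.sum_repr (ψ (b j))]
      rw [map_sum]
      simp only [LinearMap.map_smulₛₗ]
      rw [hreprN, Matrix.mul_apply]
      refine Finset.sum_congr rfl fun t _ => ?_
      rw [mul_comm, Matrix.map_apply, hA, LinearMap.toMatrix_apply]
    rw [h1, h2, hint]
  have hdet2 : A.det * P.det = Q.det * frobLift ℓ p e A.det := by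
    have h := congrArg Matrix.det hAPQA
    rw [Matrix.det_mul, Matrix.det_mul] at h
    rw [h, RingHom.map_det, RingHom.mapMatrix_apply]
  -- Step 4: the matrix W with P * W = (z - ζ)^d • 1
  have hspan : Submodule.span R (Set.range ⇑FM) ≤
      Submodule.span R (Set.range fun i => FM (b i)) := by
    rw [Submodule.span_le]
    rintro _ ⟨m, rfl⟩
    have h : FM m = ∑ i, frobLift ℓ p e (b.repr m i) • FM (b i) := by
      conv_lhs => rw [← b.sum_repr m]
      rw [map_sum]
      simp only [LinearMap.map_smulₛₗ]
    rw [h]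
    exact Submodule.sum_mem _ fun i _ => Submodule.smul_mem _ _
      (Submodule.subset_span ⟨i, rfl⟩)
  have hw : ∀ j, ∃ w : Fin s → R,
      ∑ i, w i • FM (b i) = (((X : R) - (PowerSeries.C : PowerSeries ℓ →+* PowerSeries (PowerSeries ℓ)) ζ) ^ d) • b j := by
    intro j
    exact Submodule.mem_span_range_iff_exists_fun R |>.mp (hspan (hannM (b j)))
  choose w hwspec using hw
  set W : Matrix (Fin s) (Fin s) R := fun i j => w j i with hW
  have hPW : P * W = (((X : R) - (PowerSeries.C : PowerSeries ℓ →+* PowerSeries (PowerSeries ℓ)) ζ) ^ d) •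
      (1 : Matrix (Fin s) (Fin s) R) := by
    ext i j
    have h := congrArg (fun x => b.repr x i) (hwspec j)
    beta_reduce at h
    rw [hreprM] at h
    have hlhs : (P * W) i j = ∑ t, w j t * P i t := by
      rw [Matrix.mul_apply]
      exact Finset.sum_congr rfl fun t _ => mul_comm _ _
    rw [hlhs, h, map_smul, Finsupp.smul_apply, Module.Basis.repr_self, smul_eq_mul,
      Finsupp.single_apply, Matrix.smul_apply, Matrix.one_apply]
    by_cases hij : i = j <;> simp [hij, eq_comm]
  have hdetPW : P.det * W.det = ((X : R) - (PowerSeries.C : PowerSeries ℓ →+* PowerSeries (PowerSeries ℓ)) ζ) ^ (d * s) := by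
    have h := congrArg Matrix.det hPW
    rw [Matrix.det_mul, Matrix.det_smul, Matrix.det_one, mul_one, Fintype.card_fin,
      ← pow_mul] at h
    exact h
  -- Step 5: facts about mm
  have hmmπ : mm π = 0 := by
    rw [hπ, hmm, PowerSeries.map_C]
    simp
  have hζ0 : (constantCoeff : PowerSeries ℓ →+* ℓ) ζ = 0 := X_dvd_iff.mp (Ideal.mem_span_singleton.mp hζ)
  have hmmz : mm ((X : R) - (PowerSeries.C : PowerSeries ℓ →+* PowerSeries (PowerSeries ℓ)) ζ) = (X : PowerSeries ℓ) := by
    rw [hmm, map_sub, PowerSeries.map_X, PowerSeries.map_C, hζ0]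
    simp
  have hmmP : mm P.det ≠ 0 := by
    intro h0
    have h := congrArg mm hdetPW
    rw [map_mul, h0, zero_mul, map_pow, hmmz] at h
    exact (pow_ne_zero _ (PowerSeries.X_ne_zero (R := ℓ))) h.symm
  -- Step 6: a = 0, hence det A is a unit
  have hσπ : frobLift ℓ p e π = π ^ (p ^ e) := by
    rw [hπ, frobLift, PowerSeries.map_C, iterateFrobenius_def, map_pow]
  have hπ0 : π ≠ 0 := hπprime.ne_zero
  have ha0 : a = 0 := by
    by_contra ha
    have hpe : 1 ≤ p ^ e := Nat.one_le_pow _ _ (Nat.Prime.pos Fact.out)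
    have hr2 : 2 ≤ p ^ e := by
      calc 2 ≤ p := Nat.Prime.two_le Fact.out
      _ = p ^ 1 := (pow_one p).symm
      _ ≤ p ^ e := Nat.pow_le_pow_right (Nat.Prime.pos Fact.out) he
    have hApow : A.det = π ^ a * ↑u⁻¹ := by
      exact (Units.eq_mul_inv_iff_mul_eq u).mpr hu
    have hσA : frobLift ℓ p e A.det = π ^ (p ^ e * a) * frobLift ℓ p e ↑u⁻¹ := by
      rw [hApow, map_mul, map_pow, hσπ, ← pow_mul]
    have key : ↑u⁻¹ * P.det = Q.det * (π ^ ((p ^ e - 1) * a) * frobLift ℓ p e ↑u⁻¹) := by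
      have h := hdet2
      rw [hσA, hApow] at h
      have hsplit : p ^ e * a = a + (p ^ e - 1) * a := by
        obtain ⟨t, ht⟩ := Nat.exists_eq_add_of_le hpe
        rw [ht, Nat.add_sub_cancel_left, add_mul, one_mul]
      rw [hsplit, pow_add] at h
      apply mul_left_cancel₀ (pow_ne_zero a hπ0)
      linear_combination h
    have hexp : 1 ≤ (p ^ e - 1) * a := by
      have : 1 ≤ p ^ e - 1 := by omega
      have : 1 ≤ a := Nat.one_le_iff_ne_zero.mpr ha
      exact Nat.one_le_iff_ne_zero.mpr (by positivity)
    have h := congrArg mm key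
    rw [map_mul, map_mul, map_mul, map_pow, hmmπ, zero_pow (by omega), zero_mul,
      mul_zero] at h
    have hune : mm ↑u⁻¹ ≠ 0 := by
      have : IsUnit (mm ↑u⁻¹) := (Units.isUnit u⁻¹).map mm
      exact this.ne_zero
    exact (mul_ne_zero hune hmmP) h
  have hunit : IsUnit A.det := by
    rw [ha0, pow_zero] at hu
    exact IsUnit.of_mul_eq_one _ hu
  -- Step 7: conclude
  let χ : N →ₗ[R] M := Matrix.toLin c b A⁻¹
  have hχψ : ∀ m : M, χ (ψ m) = m := by
    have h : χ.comp ψ = LinearMap.id := by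
      apply (LinearMap.toMatrix b b).injective
      rw [LinearMap.toMatrix_comp b c b, LinearMap.toMatrix_toLin, ← hA,
        Matrix.nonsing_inv_mul A hunit, LinearMap.toMatrix_id]
    intro m
    exact DFunLike.congr_fun h m
  have hψχ : ∀ n : N, ψ (χ n) = n := by
    have h : ψ.comp χ = LinearMap.id := by
      apply (LinearMap.toMatrix c c).injective
      rw [LinearMap.toMatrix_comp c b c, LinearMap.toMatrix_toLin, ← hA,
        Matrix.mul_nonsing_inv A hunit, LinearMap.toMatrix_id]
    intro n
    exact DFunLike.congr_fun h n
  exact Function.bijective_iff_has_inverse.mpr ⟨χ, hχψ, hψχ⟩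
end

section
/- Let o_L be a complete discrete valuation ring with uniformizer π, fraction field L, residue field ℓ. Let M be an o_L⟨z⟩-submodule of a finite free L⟨z⟩-module M_L, defined as M = M_L ∩ ψ^{-1}(N̂) for a finite free o_L⟦z⟧-module N̂ inside M_L ⊗_{L⟨z⟩} o_L⟦z⟧[1/π] via an isomorphism ψ : M_L ⊗ o_L⟦z⟧[1/π] ≅ N̂[1/π]. Then M is a finitely generated o_L⟨z⟩-module, and M[1/π] = M_L. -/
/-!
STATEMENT 14: Let `o_L` be a complete DVR with uniformizer `π`.  Let `M_L` be a finite
free module over `L⟨z⟩ = o_L⟨z⟩[1/π]` and `N̂` a finite free module over `o_L⟦z⟧`,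
together with an isomorphism `ψ : M_L ⊗ o_L⟦z⟧[1/π] ≅ N̂[1/π]`.  Then
`M = M_L ∩ ψ⁻¹(N̂)` is a finitely generated `o_L⟨z⟩`-module with `M[1/π] = M_L`.

We formalize this abstractly, with `O` playing the role of the Noetherian ring
`o_L⟨z⟩`, `B` the ring `o_L⟦z⟧` (with the injection `f : O → B`), `Localization.Away π`
the ring `L⟨z⟩`, and `Localization.Away (f π)` the ring `o_L⟦z⟧[1/π]`; the key
hypothesis `hint` expresses `L⟨z⟩ ∩ o_L⟦z⟧ = o_L⟨z⟩`.  The free modules are realized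
via their bases as `Fin m → L⟨z⟩` and `Fin n → B`, and `M` as the set `S` below.
"Finitely generated" is expressed as: there is a finite subset `s ⊆ S` with
`S ⊆ span_O s`; and `M[1/π] = M_L` as: every element of `M_L` is carried into `S` by
some power of `π`.
-/

theorem intersection_model_finitely_generated
    (O : Type*) [CommRing O] [IsNoetherianRing O]
    (B : Type*) [CommRing B] (f : O →+* B) (hf : Function.Injective f)
    (π : O) (hπ : π ∈ nonZeroDivisors O) (hπB : f π ∈ nonZeroDivisors B)
    (g : Localization.Away π →+* Localization.Away (f π))
    (hg : g.comp (algebraMap O (Localization.Away π)) =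
      (algebraMap B (Localization.Away (f π))).comp f)
    (hint : ∀ x : Localization.Away π,
      (∃ b : B, algebraMap B (Localization.Away (f π)) b = g x) →
      ∃ a : O, algebraMap O (Localization.Away π) a = x)
    (m n : ℕ)
    (ψ : (Fin m → Localization.Away (f π)) ≃ₗ[Localization.Away (f π)]
      (Fin n → Localization.Away (f π))) :
    letI S : Set (Fin m → Localization.Away π) :=
      {x | ∃ b : Fin n → B,
        (fun i => algebraMap B (Localization.Away (f π)) (b i)) = ψ (fun i => g (x i))}
    (∃ s : Finset (Fin m → Localization.Away π),
      ↑s ⊆ S ∧ S ⊆ (Submodule.span O (s : Set (Fin m → Localization.Away π)) : Set _)) ∧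
    (∀ y : Fin m → Localization.Away π, ∃ k : ℕ, (π ^ k) • y ∈ S) := by
  classical
  set Aπ := Localization.Away π with hAπ
  set Bπ := Localization.Away (f π) with hBπ
  set αB : B →+* Bπ := algebraMap B Bπ with hαB
  set αO : O →+* Aπ := algebraMap O Aπ with hαO
  set S : Set (Fin m → Aπ) :=
    {x | ∃ b : Fin n → B, (fun i => αB (b i)) = ψ (fun i => g (x i))} with hSdef
  have hgα : ∀ a : O, g (αO a) = αB (f a) := fun a => RingHom.congr_fun hg a
  -- surjectivity up to powers of f π
  have hsurj : ∀ x : Bπ, ∃ (k : ℕ) (b : B), (αB (f π)) ^ k * x = αB b := by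
    intro x
    obtain ⟨⟨b, s⟩, hs⟩ := IsLocalization.surj (M := Submonoid.powers (f π)) x
    obtain ⟨k, hk⟩ := s.2
    refine ⟨k, b, ?_⟩
    rw [← map_pow, show (f π) ^ k = (s : B) from hk, mul_comm]
    exact hs
  -- S is a submodule
  have hS_zero : (0 : Fin m → Aπ) ∈ S := by
    refine ⟨0, ?_⟩
    have h0 : (fun i : Fin m => g ((0 : Fin m → Aπ) i)) = 0 := by funext i; simp
    rw [h0, map_zero]
    funext j; simp
  have hS_add : ∀ x y : Fin m → Aπ, x ∈ S → y ∈ S → x + y ∈ S := by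
    rintro x y ⟨bx, hbx⟩ ⟨by', hby⟩
    refine ⟨bx + by', ?_⟩
    have h0 : (fun i => g ((x + y) i)) = (fun i => g (x i)) + (fun i => g (y i)) := by
      funext i; simp [map_add]
    rw [h0, map_add, ← hbx, ← hby]
    funext j; simp [map_add]
  have hS_smul : ∀ (a : O) (x : Fin m → Aπ), x ∈ S → a • x ∈ S := by
    rintro a x ⟨b, hb⟩
    refine ⟨fun j => f a * b j, ?_⟩
    have h1 : (fun i => g ((a • x) i)) = αB (f a) • fun i => g (x i) := by
      funext i
      rw [Pi.smul_apply, Algebra.smul_def, map_mul, hgα, Pi.smul_apply, smul_eq_mul]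
    rw [h1, map_smul, ← hb]
    funext j
    simp [map_mul]
  let S' : Submodule O (Fin m → Aπ) :=
    { carrier := S
      add_mem' := fun hx hy => hS_add _ _ hx hy
      zero_mem' := hS_zero
      smul_mem' := fun a x hx => hS_smul a x hx }
  -- entries of ψ.symm, with bounded denominators
  set c : Fin n → Fin m → Bπ := fun j => ψ.symm fun i => if j = i then 1 else 0 with hcdef
  have hc : ∀ (v : Fin n → Bπ) (i : Fin m), ψ.symm v i = ∑ j, v j * c j i := by
    intro v i
    have h0 := LinearMap.pi_apply_eq_sum_univ
      (ψ.symm : (Fin n → Bπ) →ₗ[Bπ] (Fin m → Bπ)) v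
    have h1 := congrFun h0 i
    simpa [Finset.sum_apply, smul_eq_mul, c] using h1
  have hc' : ∀ (j : Fin n) (i : Fin m), ∃ (k : ℕ) (b : B),
      (αB (f π)) ^ k * c j i = αB b := fun j i => hsurj _
  choose K bK hK using hc'
  set N := Finset.univ.sup (fun p : Fin n × Fin m => K p.1 p.2) with hNdef
  have hKN : ∀ j i, K j i ≤ N := fun j i =>
    Finset.le_sup (f := fun p : Fin n × Fin m => K p.1 p.2) (Finset.mem_univ (j, i))
  have hcN : ∀ (j : Fin n) (i : Fin m), ∃ b : B, (αB (f π)) ^ N * c j i = αB b := by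
    intro j i
    refine ⟨(f π) ^ (N - K j i) * bK j i, ?_⟩
    have h0 : (αB (f π)) ^ N = (αB (f π)) ^ (N - K j i) * (αB (f π)) ^ (K j i) := by
      rw [← pow_add, Nat.sub_add_cancel (hKN j i)]
    rw [h0, mul_assoc, hK, map_mul, map_pow]
  choose cb hcb using hcN
  -- the denominator bound for elements of S
  have hbound : ∀ x ∈ S, ∀ i : Fin m, ∃ a : O, αO a = (αO π) ^ N * x i := by
    intro x hx i
    obtain ⟨b, hb⟩ := hx
    have h0 : (fun i : Fin m => g (x i)) = ψ.symm fun j => αB (b j) := by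
      rw [hb, LinearEquiv.symm_apply_apply]
    have hgx : g (x i) = ∑ j, αB (b j) * c j i := by
      have := congrFun h0 i
      rw [this, hc]
    apply hint
    refine ⟨∑ j, b j * cb j i, ?_⟩
    have h2 : g ((αO π) ^ N * x i) = αB (∑ j, b j * cb j i) := by
      rw [map_mul, map_pow, hgα, hgx, Finset.mul_sum, map_sum]
      refine Finset.sum_congr rfl fun j _ => ?_
      rw [map_mul, ← hcb]
      ring
    exact h2.symm
  -- the containing finitely generated module
  obtain ⟨u, hu⟩ : ∃ u : Aπ, αO π * u = 1 := by
    have h0 : IsUnit (αO π) := IsLocalization.Away.algebraMap_isUnit π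
    exact ⟨↑h0.unit⁻¹, h0.mul_val_inv⟩
  set P : Submodule O (Fin m → Aπ) :=
    Submodule.span O (Set.range fun i : Fin m => u ^ N • Pi.single i (1 : Aπ)) with hPdef
  have hSP : S' ≤ P := by
    intro x hx
    choose a ha using hbound x hx
    have hxeq : x = ∑ i, a i • (u ^ N • Pi.single i (1 : Aπ)) := by
      funext i'
      rw [Finset.sum_apply]
      have h1 : ∀ i : Fin m, ((a i • u ^ N • Pi.single i (1 : Aπ) : Fin m → Aπ)) i'
          = (algebraMap O Aπ) (a i) * u ^ N * (if i' = i then (1 : Aπ) else 0) := by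
        intro i
        have e1 : ((a i • u ^ N • Pi.single i (1 : Aπ) : Fin m → Aπ)) i'
            = a i • (u ^ N * (Pi.single i (1 : Aπ) : Fin m → Aπ) i') := by
          simp only [Pi.smul_apply, smul_eq_mul]
        rw [e1, Algebra.smul_def, Pi.single_apply, mul_assoc]
      simp only [h1, mul_ite, mul_one, mul_zero, Finset.sum_ite_eq, Finset.sum_ite_eq',
        Finset.mem_univ, if_true]
      rw [show (algebraMap O Aπ) (a i') = αO π ^ N * x i' from ha i',
        mul_comm ((αO π) ^ N) (x i'), mul_assoc, ← mul_pow, hu, one_pow, mul_one]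
    rw [hxeq]
    exact Submodule.sum_mem _ fun i _ =>
      Submodule.smul_mem _ _ (Submodule.subset_span ⟨i, rfl⟩)
  haveI hPN : IsNoetherian O P :=
    isNoetherian_of_fg_of_noetherian P (Submodule.fg_span (Set.finite_range _))
  have hfg : S'.FG := by
    have h1 : (Submodule.comap P.subtype S').FG := IsNoetherian.noetherian _
    have h2 : Submodule.map P.subtype (Submodule.comap P.subtype S') = S' := by
      rw [Submodule.map_comap_subtype]
      exact inf_eq_right.mpr hSP
    rw [← h2]
    exact h1.map _
  obtain ⟨t, ht⟩ := hfg
  constructor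
  · refine ⟨t, ?_, ?_⟩
    · intro x hx
      have : x ∈ Submodule.span O (t : Set (Fin m → Aπ)) := Submodule.subset_span hx
      rw [ht] at this
      exact this
    · intro x hx
      have : x ∈ S' := hx
      rw [← ht] at this
      exact this
  · intro y
    set w : Fin n → Bπ := ψ fun i => g (y i) with hwdef
    choose K' b' hK' using fun j => hsurj (w j)
    set k := Finset.univ.sup K' with hkdef
    refine ⟨k, fun j => (f π) ^ (k - K' j) * b' j, ?_⟩
    have h1 : (fun i => g ((π ^ k • y) i)) = (αB (f π)) ^ k • fun i => g (y i) := by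
      funext i
      have h0 : g (αO (π ^ k)) = (αB (f π)) ^ k := by rw [hgα, map_pow, map_pow]
      rw [Pi.smul_apply, Algebra.smul_def, map_mul, h0, Pi.smul_apply, smul_eq_mul]
    rw [h1, map_smul]
    funext j
    rw [Pi.smul_apply, smul_eq_mul, map_mul, map_pow, ← hK' j, ← mul_assoc, ← pow_add,
      Nat.sub_add_cancel (Finset.le_sup (Finset.mem_univ j))]
end
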